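/- For the nrDFAwtl A_ex3 defined in the context, L(A_ex3) ∩ (abc)* = {(abc)^(3ⁿ) : n ≥ 0}, i.e., exactly those powers (abc)^m with m a power of 3 are accepted among the words in (abc)*. -/

import Mathlib

/-- The end-of-tape behaviour of a non-returning automaton with translucent
letters: either a set of states to continue with (the empty set meaning that
the transition is undefined), or the operation `Accept`. -/
inductive EndMove (Q : Type) where
  | cont : Set Q → EndMove Q
  | accept : EndMove Q

/-- A nondeterministic finite automaton with translucent letters (NFAwtl).
`τ q` is the set of letters that are translucent for state `q`. -/
structure NFAwtl (Q : Type) (A : Type) where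
  τ : Q → Set A
  I : Set Q
  F : Set Q
  δ : Q → A → Set Q
  tr_compat : ∀ q a, a ∈ τ q → δ q a = ∅

namespace NFAwtl

variable {Q A : Type}

/-- A single computation step of an NFAwtl: the first letter (from the left)
that is not translucent for the current state is read and deleted. -/
inductive Step (M : NFAwtl Q A) : Q × List A → Q × List A → Prop
  | read (q q' : Q) (u v : List A) (a : A) :
      (∀ b ∈ u, b ∈ M.τ q) → a ∉ M.τ q → q' ∈ M.δ q a →
      Step M (q, u ++ a :: v) (q', u ++ v)

/-- The language accepted by an NFAwtl: words from which some computation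
reaches a configuration whose remaining tape contents is translucent for a
final state. -/
def lang (M : NFAwtl Q A) : Set (List A) :=
  { w | ∃ q₀ ∈ M.I, ∃ q w', Relation.ReflTransGen (Step M) (q₀, w) (q, w') ∧
        (∀ b ∈ w', b ∈ M.τ q) ∧ q ∈ M.F }

/-- An NFAwtl is deterministic (a DFAwtl) if it has a single initial state and
at most one transition for each state/letter pair. -/
def IsDet (M : NFAwtl Q A) : Prop :=
  (∃ q, M.I = {q}) ∧ ∀ q a, (M.δ q a).Subsingleton

end NFAwtl

/-- A configuration of a non-returning automaton with translucent letters: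
`conf x q w` means the tape contains `x ++ w` followed by the end-of-tape
marker, the current state is `q`, and the head is positioned at the first
letter of `w`; `accept` is the accepting halting configuration. -/
inductive NrConf (Q : Type) (A : Type) where
  | conf : List A → Q → List A → NrConf Q A
  | accept : NrConf Q A

/-- A non-returning nondeterministic finite automaton with translucent
letters (nrNFAwtl). -/
structure NrNFAwtl (Q : Type) (A : Type) where
  τ : Q → Set A
  I : Set Q
  δ : Q → A → Set Q
  δend : Q → EndMove Q
  tr_compat : ∀ q a, a ∈ τ q → δ q a = ∅

namespace NrNFAwtl

variable {Q A : Type}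

/-- A single computation step of an nrNFAwtl. -/
inductive Step (M : NrNFAwtl Q A) : NrConf Q A → NrConf Q A → Prop
  | read (x : List A) (q q' : Q) (u v : List A) (a : A) :
      (∀ b ∈ u, b ∈ M.τ q) → a ∉ M.τ q → q' ∈ M.δ q a →
      Step M (.conf x q (u ++ a :: v)) (.conf (x ++ u) q' v)
  | restart (x w : List A) (q q' : Q) (S : Set Q) :
      (∀ b ∈ w, b ∈ M.τ q) → M.δend q = .cont S → q' ∈ S →
      Step M (.conf x q w) (.conf [] q' (x ++ w))
  | accept (x w : List A) (q : Q) :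
      (∀ b ∈ w, b ∈ M.τ q) → M.δend q = .accept →
      Step M (.conf x q w) .accept

/-- The language accepted by an nrNFAwtl. -/
def lang (M : NrNFAwtl Q A) : Set (List A) :=
  { w | ∃ q₀ ∈ M.I, Relation.ReflTransGen (Step M) (.conf [] q₀ w) .accept }

/-- An nrNFAwtl is deterministic (an nrDFAwtl) if it has a single initial
state and, for every state and every letter (including the end-of-tape
marker), at most one transition is available. -/
def IsDet (M : NrNFAwtl Q A) : Prop :=
  (∃ q, M.I = {q}) ∧ (∀ q a, (M.δ q a).Subsingleton) ∧
  (∀ q S, M.δend q = .cont S → S.Subsingleton)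

end NrNFAwtl

/-- `L` is accepted by some NFAwtl. -/
def AcceptedByNFAwtl {A : Type} [Fintype A] (L : Set (List A)) : Prop :=
  ∃ (Q : Type) (_ : Fintype Q) (M : NFAwtl Q A), M.lang = L

/-- `L` is accepted by some DFAwtl. -/
def AcceptedByDFAwtl {A : Type} [Fintype A] (L : Set (List A)) : Prop :=
  ∃ (Q : Type) (_ : Fintype Q) (M : NFAwtl Q A), M.IsDet ∧ M.lang = L

/-- `L` is accepted by some nrNFAwtl. -/
def AcceptedByNrNFAwtl {A : Type} [Fintype A] (L : Set (List A)) : Prop :=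
  ∃ (Q : Type) (_ : Fintype Q) (M : NrNFAwtl Q A), M.lang = L

/-- `L` is accepted by some nrDFAwtl. -/
def AcceptedByNrDFAwtl {A : Type} [Fintype A] (L : Set (List A)) : Prop :=
  ∃ (Q : Type) (_ : Fintype Q) (M : NrNFAwtl Q A), M.IsDet ∧ M.lang = L

/-- The three-letter alphabet `{a, b, c}`. -/
inductive Γ3 : Type
  | a | b | c
deriving DecidableEq

instance : Fintype Γ3 :=
  ⟨{Γ3.a, Γ3.b, Γ3.c}, by intro x; cases x <;> simp⟩

/-- The state set of the nrDFAwtl `A_ex3`. -/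
inductive StEx3 : Type
  | q0 | q1 | q2 | q3 | q4 | q5 | q6 | q7 | q8
deriving DecidableEq

instance : Fintype StEx3 :=
  ⟨{StEx3.q0, StEx3.q1, StEx3.q2, StEx3.q3, StEx3.q4, StEx3.q5, StEx3.q6, StEx3.q7, StEx3.q8},
    by intro x; cases x <;> simp⟩

/-- The translucency mapping of `A_ex3`. -/
def τEx3 : StEx3 → Set Γ3
  | .q0 => {Γ3.a}
  | .q1 => ∅
  | .q2 => ∅
  | .q3 => {Γ3.b}
  | .q4 => ∅
  | .q5 => ∅
  | .q6 => {Γ3.a, Γ3.c}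
  | .q7 => ∅
  | .q8 => ∅

/-- The letter transitions of `A_ex3`. -/
def δEx3 : StEx3 → Γ3 → Set StEx3
  | .q0, .b => {StEx3.q1}
  | .q1, .c => {StEx3.q2}
  | .q2, .a => {StEx3.q3}
  | .q3, .c => {StEx3.q4}
  | .q4, .a => {StEx3.q5}
  | .q5, .b => {StEx3.q6}
  | .q6, .b => {StEx3.q1}
  | .q7, .a => {StEx3.q8}
  | _, _ => ∅

/-- The end-of-tape transitions of `A_ex3`. -/
def δendEx3 : StEx3 → EndMove StEx3
  | .q2 => .cont {StEx3.q7}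
  | .q6 => .cont {StEx3.q0}
  | .q8 => .accept
  | _ => .cont ∅

/-- The nrDFAwtl `A_ex3` from Example 7 of the paper. -/
def Aex3 : NrNFAwtl StEx3 Γ3 where
  τ := τEx3
  I := {StEx3.q0}
  δ := δEx3
  δend := δendEx3
  tr_compat := by
    intro q x h
    cases q <;> cases x <;> simp_all [τEx3, δEx3]

section Aex3Proof

open Relation Γ3 StEx3

/-- `(abc)^m`. -/
abbrev R (m : ℕ) : List Γ3 := (List.replicate m [Γ3.a, Γ3.b, Γ3.c]).flatten

lemma R_succ (m : ℕ) : R (m + 1) = Γ3.a :: Γ3.b :: Γ3.c :: R m := rfl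

lemma R_snoc (m : ℕ) : R (m + 1) = R m ++ [Γ3.a, Γ3.b, Γ3.c] := by
  simp [R, List.replicate_succ']

/-- Helper to build a read step with explicitly given decompositions. -/
lemma stepR {x x' w v u : List Γ3} {q q' : StEx3} {a : Γ3}
    (hw : w = u ++ a :: v) (hx : x' = x ++ u)
    (hu : ∀ b ∈ u, b ∈ Aex3.τ q) (ha : a ∉ Aex3.τ q) (hq : q' ∈ Aex3.δ q a) :
    Aex3.Step (.conf x q w) (.conf x' q' v) := by
  subst hw hx; exact NrNFAwtl.Step.read x q q' u v a hu ha hq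

/-- Helper to build a restart step. -/
lemma stepRestart {x w t : List Γ3} {q q' : StEx3} {S : Set StEx3}
    (ht : t = x ++ w) (hw : ∀ b ∈ w, b ∈ Aex3.τ q)
    (he : Aex3.δend q = .cont S) (hq : q' ∈ S) :
    Aex3.Step (.conf x q w) (.conf [] q' t) := by
  subst ht; exact NrNFAwtl.Step.restart x w q q' S hw he hq

/-- Uniqueness of the decomposition used by a read step. -/
lemma split_unique {q : StEx3} {u : List Γ3} :
    ∀ {u' v v' : List Γ3} {a a' : Γ3},
    (∀ b ∈ u, b ∈ τEx3 q) → (∀ b ∈ u', b ∈ τEx3 q) →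
    a ∉ τEx3 q → a' ∉ τEx3 q → u ++ a :: v = u' ++ a' :: v' →
    u = u' ∧ a = a' ∧ v = v' := by
  induction u with
  | nil =>
    intro u' v v' a a' hu hu' ha ha' h
    cases u' with
    | nil => simpa using h
    | cons x t =>
      simp only [List.nil_append, List.cons_append, List.cons.injEq] at h
      exact absurd (h.1 ▸ hu' x (by simp)) ha
  | cons x t ih =>
    intro u' v v' a a' hu hu' ha ha' h
    cases u' with
    | nil =>
      simp only [List.cons_append, List.nil_append, List.cons.injEq] at h
      exact absurd (h.1 ▸ hu x (by simp)) ha'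
    | cons y t' =>
      simp only [List.cons_append, List.cons.injEq] at h
      obtain ⟨rfl, h2⟩ := h
      obtain ⟨rfl, rfl, rfl⟩ := ih (fun b hb => hu b (by simp [hb]))
        (fun b hb => hu' b (by simp [hb])) ha ha' h2
      exact ⟨rfl, rfl, rfl⟩

/-- `Aex3` is deterministic as a step relation. -/
lemma det {c c₁ c₂ : NrConf StEx3 Γ3}
    (h₁ : Aex3.Step c c₁) (h₂ : Aex3.Step c c₂) : c₁ = c₂ := by
  cases h₁ with
  | read x q q' u v a hu ha hq =>
    generalize hw0 : u ++ a :: v = w0 at h₂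
    cases h₂ with
    | read _ _ q'' u' v' a' hu' ha' hq' =>
      obtain ⟨rfl, rfl, rfl⟩ := split_unique hu hu' ha ha' hw0
      have : q' = q'' := by cases q <;> cases a <;> simp_all [Aex3, δEx3]
      rw [this]
    | restart _ _ _ q'' S hw he hq'' =>
      exact absurd (hw a (by rw [← hw0]; simp)) ha
    | accept _ _ _ hw he =>
      exact absurd (hw a (by rw [← hw0]; simp)) ha
  | restart x w q q' S hw he hq =>
    cases h₂ with
    | read _ _ q'' u' v' a' hu' ha' hq' =>
      exact absurd (hw a' (by simp)) ha'
    | restart _ _ _ q'' S' hw' he' hq' =>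
      rw [he] at he'
      injection he' with hSS
      subst hSS
      have : q' = q'' := by
        cases q <;> simp_all [Aex3, δendEx3] <;> (subst he; simp_all)
      rw [this]
    | accept _ _ _ hw' he' =>
      rw [he] at he'; cases he'
  | accept x w q hw he =>
    cases h₂ with
    | read _ _ q'' u' v' a' hu' ha' hq' =>
      exact absurd (hw a' (by simp)) ha'
    | restart _ _ _ q'' S' hw' he' hq' =>
      rw [he] at he'; cases he'
    | accept => rfl

/-- Acceptance from a configuration. -/
def accFrom (c : NrConf StEx3 Γ3) : Prop :=
  ReflTransGen Aex3.Step c .accept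

lemma acc_of_rtg {c d : NrConf StEx3 Γ3}
    (h : ReflTransGen Aex3.Step c d) (hc : accFrom c) : accFrom d := by
  induction h with
  | refl => exact hc
  | tail _ hstep ih =>
    rcases ih.cases_head with h' | ⟨e, he, hacc⟩
    · subst h'; cases hstep
    · rwa [det hstep he]

lemma no_acc {c : NrConf StEx3 Γ3}
    (h : ∀ d, ¬ Aex3.Step c d) (hne : c ≠ .accept) : ¬ accFrom c := by
  intro hacc
  rcases hacc.cases_head with h' | ⟨d, hd, _⟩
  exacts [hne h', h d hd]

lemma stuck_q4 (x : List Γ3) (d : NrConf StEx3 Γ3) :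
    ¬ Aex3.Step (.conf x .q4 []) d := by
  intro h
  generalize hw0 : ([] : List Γ3) = w0 at h
  cases h with
  | read _ _ q' u v a hu ha hq => simp at hw0
  | restart _ _ _ q' S hw he hq =>
    simp only [Aex3, δendEx3] at he
    injection he with hS
    rw [← hS] at hq
    exact hq
  | accept _ _ _ hw he => simp [Aex3, δendEx3] at he

lemma stuck_q8 (w : List Γ3) (d : NrConf StEx3 Γ3) :
    ¬ Aex3.Step (.conf [] .q8 (Γ3.b :: w)) d := by
  intro h
  generalize hw0 : Γ3.b :: w = w0 at h
  cases h with
  | read _ _ q' u v a hu ha hq =>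
    cases a <;> simp_all [Aex3, δEx3]
  | restart _ _ _ q' S hw he hq =>
    have := hw Γ3.b (by rw [← hw0]; simp)
    simp [Aex3, τEx3] at this
  | accept _ _ _ hw he =>
    have := hw Γ3.b (by rw [← hw0]; simp)
    simp [Aex3, τEx3] at this

lemma stuck_q0nil (d : NrConf StEx3 Γ3) :
    ¬ Aex3.Step (.conf [] .q0 []) d := by
  intro h
  generalize hw0 : ([] : List Γ3) = w0 at h
  cases h with
  | read _ _ q' u v a hu ha hq => simp at hw0
  | restart _ _ _ q' S hw he hq =>
    simp only [Aex3, δendEx3] at he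
    injection he with hS
    rw [← hS] at hq
    exact hq
  | accept _ _ _ hw he => simp [Aex3, δendEx3] at he

/-- First step from the initial state on nonempty input. -/
lemma start (m : ℕ) :
    Aex3.Step (.conf [] .q0 (R (m + 1))) (.conf (R 0 ++ [Γ3.a]) .q1 (Γ3.c :: R m)) :=
  stepR (u := [Γ3.a]) (a := Γ3.b) (v := Γ3.c :: R m) rfl rfl
    (by simp [Aex3, τEx3]) (by simp [Aex3, τEx3]) (by simp [Aex3, δEx3])

/-- One full cycle `q1 → ⋯ → q6 → q1` consumes three blocks' worth. -/
lemma cycle (j r : ℕ) :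
    ReflTransGen Aex3.Step (.conf (R j ++ [Γ3.a]) .q1 (Γ3.c :: R (r + 3)))
      (.conf (R (j + 1) ++ [Γ3.a]) .q1 (Γ3.c :: R r)) := by
  have s1 : Aex3.Step (.conf (R j ++ [Γ3.a]) .q1 (Γ3.c :: R (r + 3)))
      (.conf (R j ++ [Γ3.a]) .q2 (R (r + 3))) :=
    stepR (u := []) rfl (by simp) (by simp) (by simp [Aex3, τEx3]) (by simp [Aex3, δEx3])
  have s2 : Aex3.Step (.conf (R j ++ [Γ3.a]) .q2 (R (r + 3)))
      (.conf (R j ++ [Γ3.a]) .q3 (Γ3.b :: Γ3.c :: R (r + 2))) :=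
    stepR (u := []) (by rw [R_succ]; rfl) (by simp) (by simp) (by simp [Aex3, τEx3])
      (by simp [Aex3, δEx3])
  have s3 : Aex3.Step (.conf (R j ++ [Γ3.a]) .q3 (Γ3.b :: Γ3.c :: R (r + 2)))
      (.conf (R j ++ [Γ3.a, Γ3.b]) .q4 (R (r + 2))) :=
    stepR (u := [Γ3.b]) rfl (by simp) (by simp [Aex3, τEx3]) (by simp [Aex3, τEx3])
      (by simp [Aex3, δEx3])
  have s4 : Aex3.Step (.conf (R j ++ [Γ3.a, Γ3.b]) .q4 (R (r + 2)))
      (.conf (R j ++ [Γ3.a, Γ3.b]) .q5 (Γ3.b :: Γ3.c :: R (r + 1))) :=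
    stepR (u := []) (by rw [R_succ]; rfl) (by simp) (by simp) (by simp [Aex3, τEx3])
      (by simp [Aex3, δEx3])
  have s5 : Aex3.Step (.conf (R j ++ [Γ3.a, Γ3.b]) .q5 (Γ3.b :: Γ3.c :: R (r + 1)))
      (.conf (R j ++ [Γ3.a, Γ3.b]) .q6 (Γ3.c :: R (r + 1))) :=
    stepR (u := []) rfl (by simp) (by simp) (by simp [Aex3, τEx3]) (by simp [Aex3, δEx3])
  have s6 : Aex3.Step (.conf (R j ++ [Γ3.a, Γ3.b]) .q6 (Γ3.c :: R (r + 1)))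
      (.conf (R (j + 1) ++ [Γ3.a]) .q1 (Γ3.c :: R r)) :=
    stepR (u := [Γ3.c, Γ3.a]) (a := Γ3.b) (v := Γ3.c :: R r)
      (by rw [R_succ]; rfl)
      (by rw [R_snoc]; simp)
      (by intro b hb; fin_cases hb <;> simp [Aex3, τEx3])
      (by simp [Aex3, τEx3]) (by simp [Aex3, δEx3])
  exact .head s1 (.head s2 (.head s3 (.head s4 (.head s5 (.single s6)))))

lemma cycles (t : ℕ) : ∀ j r : ℕ,
    ReflTransGen Aex3.Step (.conf (R j ++ [Γ3.a]) .q1 (Γ3.c :: R (r + 3 * t)))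
      (.conf (R (j + t) ++ [Γ3.a]) .q1 (Γ3.c :: R r)) := by
  induction t with
  | zero => intro j r; simp only [Nat.mul_zero, Nat.add_zero]; exact .refl
  | succ t ih =>
    intro j r
    rw [show r + 3 * (t + 1) = (r + 3 * t) + 3 by ring, show j + (t + 1) = (j + 1) + t by ring]
    exact (cycle j (r + 3 * t)).trans (ih (j + 1) r)

/-- The end of a successful sweep: restart with a third of the blocks. -/
lemma restartSweep (j : ℕ) :
    ReflTransGen Aex3.Step (.conf (R j ++ [Γ3.a]) .q1 (Γ3.c :: R 2))
      (.conf [] .q0 (R (j + 1))) := by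
  have s1 : Aex3.Step (.conf (R j ++ [Γ3.a]) .q1 (Γ3.c :: R 2))
      (.conf (R j ++ [Γ3.a]) .q2 (R 2)) :=
    stepR (u := []) rfl (by simp) (by simp) (by simp [Aex3, τEx3]) (by simp [Aex3, δEx3])
  have s2 : Aex3.Step (.conf (R j ++ [Γ3.a]) .q2 (R 2))
      (.conf (R j ++ [Γ3.a]) .q3 (Γ3.b :: Γ3.c :: R 1)) :=
    stepR (u := []) (by rw [show (2:ℕ) = 1 + 1 from rfl, R_succ]; rfl) (by simp) (by simp)
      (by simp [Aex3, τEx3]) (by simp [Aex3, δEx3])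
  have s3 : Aex3.Step (.conf (R j ++ [Γ3.a]) .q3 (Γ3.b :: Γ3.c :: R 1))
      (.conf (R j ++ [Γ3.a, Γ3.b]) .q4 (R 1)) :=
    stepR (u := [Γ3.b]) rfl (by simp) (by simp [Aex3, τEx3]) (by simp [Aex3, τEx3])
      (by simp [Aex3, δEx3])
  have s4 : Aex3.Step (.conf (R j ++ [Γ3.a, Γ3.b]) .q4 (R 1))
      (.conf (R j ++ [Γ3.a, Γ3.b]) .q5 [Γ3.b, Γ3.c]) :=
    stepR (u := []) rfl (by simp) (by simp) (by simp [Aex3, τEx3]) (by simp [Aex3, δEx3])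
  have s5 : Aex3.Step (.conf (R j ++ [Γ3.a, Γ3.b]) .q5 [Γ3.b, Γ3.c])
      (.conf (R j ++ [Γ3.a, Γ3.b]) .q6 [Γ3.c]) :=
    stepR (u := []) rfl (by simp) (by simp) (by simp [Aex3, τEx3]) (by simp [Aex3, δEx3])
  have s6 : Aex3.Step (.conf (R j ++ [Γ3.a, Γ3.b]) .q6 [Γ3.c])
      (.conf [] .q0 (R (j + 1))) :=
    stepRestart (S := {StEx3.q0}) (by rw [R_snoc]; simp)
      (by intro b hb; fin_cases hb <;> simp [Aex3, τEx3]) rfl rfl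
  exact .head s1 (.head s2 (.head s3 (.head s4 (.head s5 (.single s6)))))

/-- `(abc)¹` is accepted. -/
lemma acceptRun : accFrom (.conf [] .q0 (R 1)) := by
  have s1 : Aex3.Step (.conf [] .q0 (R 1)) (.conf [Γ3.a] .q1 [Γ3.c]) :=
    stepR (u := [Γ3.a]) (a := Γ3.b) (v := [Γ3.c]) rfl rfl
      (by simp [Aex3, τEx3]) (by simp [Aex3, τEx3]) (by simp [Aex3, δEx3])
  have s2 : Aex3.Step (.conf [Γ3.a] .q1 [Γ3.c]) (.conf [Γ3.a] .q2 []) :=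
    stepR (u := []) rfl (by simp) (by simp) (by simp [Aex3, τEx3]) (by simp [Aex3, δEx3])
  have s3 : Aex3.Step (.conf [Γ3.a] .q2 []) (.conf [] .q7 [Γ3.a]) :=
    stepRestart (S := {StEx3.q7}) (by simp) (by simp) rfl rfl
  have s4 : Aex3.Step (.conf [] .q7 [Γ3.a]) (.conf [] .q8 []) :=
    stepR (u := []) rfl (by simp) (by simp) (by simp [Aex3, τEx3]) (by simp [Aex3, δEx3])
  have s5 : Aex3.Step (.conf [] .q8 []) .accept :=
    NrNFAwtl.Step.accept [] [] StEx3.q8 (by simp) rfl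
  exact .head s1 (.head s2 (.head s3 (.head s4 (.single s5))))

/-- Forward direction: all powers `(abc)^(3ⁿ)` are accepted. -/
lemma forward (n : ℕ) : accFrom (.conf [] .q0 (R (3 ^ n))) := by
  induction n with
  | zero => exact acceptRun
  | succ n ih =>
    obtain ⟨p, hp⟩ : ∃ p, 3 ^ n = p + 1 :=
      ⟨3 ^ n - 1, by have := Nat.one_le_pow n 3 (by norm_num); omega⟩
    have h1 : Aex3.Step (.conf [] .q0 (R (3 ^ (n + 1))))
        (.conf (R 0 ++ [Γ3.a]) .q1 (Γ3.c :: R (2 + 3 * p))) := by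
      rw [show 3 ^ (n + 1) = (2 + 3 * p) + 1 by rw [pow_succ]; omega]
      exact start _
    have h2 := cycles p 0 2
    rw [Nat.zero_add] at h2
    have h3 := restartSweep p
    rw [← hp] at h3
    exact ((ReflTransGen.single h1).trans (h2.trans h3)).trans ih

/-- Backward direction: only powers of three are accepted among `(abc)^m`. -/
lemma backward : ∀ m : ℕ, accFrom (.conf [] .q0 (R m)) → ∃ n, m = 3 ^ n := by
  intro m
  induction m using Nat.strong_induction_on with
  | _ m ih =>
    intro hm
    match m with
    | 0 => exact absurd hm (no_acc stuck_q0nil (by simp))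
    | 1 => exact ⟨0, rfl⟩
    | (p + 2) =>
      have hC : accFrom (.conf (R 0 ++ [Γ3.a]) .q1 (Γ3.c :: R (p + 1))) :=
        acc_of_rtg (ReflTransGen.single (start (p + 1))) hm
      have hmod : (p + 1) % 3 = 0 ∨ (p + 1) % 3 = 1 ∨ (p + 1) % 3 = 2 := by omega
      rcases hmod with h0 | h1 | h2
      · -- p + 1 = 3 t with t ≥ 1 : gets stuck in q8
        obtain ⟨t, ht⟩ : ∃ t, p + 1 = 0 + 3 * t := ⟨(p + 1) / 3, by omega⟩
        have ht1 : 1 ≤ t := by omega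
        obtain ⟨t', rfl⟩ : ∃ t', t = t' + 1 := ⟨t - 1, by omega⟩
        rw [ht] at hC
        have hC2 := acc_of_rtg (cycles (t' + 1) 0 0) hC
        rw [Nat.zero_add] at hC2
        have s1 : Aex3.Step (.conf (R (t' + 1) ++ [Γ3.a]) .q1 (Γ3.c :: R 0))
            (.conf (R (t' + 1) ++ [Γ3.a]) .q2 []) :=
          stepR (u := []) rfl (by simp) (by simp) (by simp [Aex3, τEx3])
            (by simp [Aex3, δEx3])
        have s2 : Aex3.Step (.conf (R (t' + 1) ++ [Γ3.a]) .q2 [])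
            (.conf [] .q7 (R (t' + 1) ++ [Γ3.a])) :=
          stepRestart (S := {StEx3.q7}) (by simp) (by simp) rfl rfl
        have s3 : Aex3.Step (.conf [] .q7 (R (t' + 1) ++ [Γ3.a]))
            (.conf [] .q8 (Γ3.b :: (Γ3.c :: R t' ++ [Γ3.a]))) :=
          stepR (u := []) (a := Γ3.a) (by rw [R_succ]; rfl) (by simp) (by simp)
            (by simp [Aex3, τEx3]) (by simp [Aex3, δEx3])
        have hC3 := acc_of_rtg (ReflTransGen.head s1 (ReflTransGen.head s2
          (ReflTransGen.single s3))) hC2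
        exact absurd hC3 (no_acc (stuck_q8 _) (by simp))
      · -- p + 1 = 3 t + 1 : gets stuck in q4
        obtain ⟨t, ht⟩ : ∃ t, p + 1 = 1 + 3 * t := ⟨(p + 1) / 3, by omega⟩
        rw [ht] at hC
        have hC2 := acc_of_rtg (cycles t 0 1) hC
        rw [Nat.zero_add] at hC2
        have s1 : Aex3.Step (.conf (R t ++ [Γ3.a]) .q1 (Γ3.c :: R 1))
            (.conf (R t ++ [Γ3.a]) .q2 (R 1)) :=
          stepR (u := []) rfl (by simp) (by simp) (by simp [Aex3, τEx3])
            (by simp [Aex3, δEx3])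
        have s2 : Aex3.Step (.conf (R t ++ [Γ3.a]) .q2 (R 1))
            (.conf (R t ++ [Γ3.a]) .q3 [Γ3.b, Γ3.c]) :=
          stepR (u := []) rfl (by simp) (by simp) (by simp [Aex3, τEx3])
            (by simp [Aex3, δEx3])
        have s3 : Aex3.Step (.conf (R t ++ [Γ3.a]) .q3 [Γ3.b, Γ3.c])
            (.conf (R t ++ [Γ3.a] ++ [Γ3.b]) .q4 []) :=
          stepR (u := [Γ3.b]) (a := Γ3.c) (v := []) rfl rfl
            (by simp [Aex3, τEx3]) (by simp [Aex3, τEx3]) (by simp [Aex3, δEx3])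
        have hC3 := acc_of_rtg (ReflTransGen.head s1 (ReflTransGen.head s2
          (ReflTransGen.single s3))) hC2
        exact absurd hC3 (no_acc (stuck_q4 _) (by simp))
      · -- p + 1 = 3 t + 2 : sweep succeeds, recurse on t + 1
        obtain ⟨t, ht⟩ : ∃ t, p + 1 = 2 + 3 * t := ⟨(p + 1) / 3, by omega⟩
        rw [ht] at hC
        have hC2 := acc_of_rtg (cycles t 0 2) hC
        rw [Nat.zero_add] at hC2
        have hC3 := acc_of_rtg (restartSweep t) hC2
        obtain ⟨n, hn⟩ := ih (t + 1) (by omega) hC3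
        exact ⟨n + 1, by rw [pow_succ]; omega⟩

end Aex3Proof

/-- `L(A_ex3) ∩ (abc)* = {(abc)^(3ⁿ) : n ≥ 0}`. -/
theorem Aex3_inter_abc_star :
    Aex3.lang ∩ { w | ∃ m : ℕ, w = (List.replicate m [Γ3.a, Γ3.b, Γ3.c]).flatten } =
    { w | ∃ n : ℕ, w = (List.replicate (3 ^ n) [Γ3.a, Γ3.b, Γ3.c]).flatten } := by
  ext w
  simp only [Set.mem_inter_iff, Set.mem_setOf_eq]
  constructor
  · rintro ⟨hw, m, rfl⟩
    obtain ⟨q₀, hq₀, hrun⟩ := hw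
    have hq : q₀ = StEx3.q0 := hq₀
    subst hq
    obtain ⟨n, rfl⟩ := backward m hrun
    exact ⟨n, rfl⟩
  · rintro ⟨n, rfl⟩
    exact ⟨⟨StEx3.q0, rfl, forward n⟩, ⟨3 ^ n, rfl⟩⟩
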